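/- Let p_1, ..., p_n be distinct primes and for each i let ζ_{p_i} be a primitive p_i-th root of unity. If integers α_1, ..., α_n satisfy ∏_{i=1}^n (1 − ζ_{p_i})^{α_i} = 1, then α_i = 0 for all i. In other words, the algebraic numbers 1 − ζ_{p_1}, ..., 1 − ζ_{p_n} are multiplicatively independent. -/

import Mathlib

open Polynomial Finset

lemma aux_root_integral {p : ℕ} (hp : 0 < p) {ν : ℂ} (hν : ν ^ p = 1) : IsIntegral ℤ ν := by
  refine ⟨X ^ p - C 1, monic_X_pow_sub_C 1 hp.ne', ?_⟩
  simp [hν]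

lemma aux_factor {p : ℕ} (hp : 0 < p) {ν μ : ℂ} (hν : IsPrimitiveRoot ν p)
    (hμ : μ ^ p = 1) : ∃ t : ℂ, IsIntegral ℤ t ∧ 1 - μ = (1 - ν) * t := by
  have : NeZero p := ⟨hp.ne'⟩
  obtain ⟨k, -, rfl⟩ := hν.eq_pow_of_pow_eq_one hμ
  have hint : IsIntegral ℤ ν := aux_root_integral hp hν.pow_eq_one
  refine ⟨∑ j ∈ range k, ν ^ j, IsIntegral.sum _ fun j _ => hint.pow j, ?_⟩
  linear_combination geom_sum_mul ν k

lemma aux_unit {p : ℕ} (hp : p.Prime) {ζ : ℂ} (hζ : IsPrimitiveRoot ζ p) :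
    ∃ u v : ℂ, IsIntegral ℤ u ∧ IsIntegral ℤ v ∧ u * v = 1 ∧
      (1 - ζ) ^ (p - 1) = (p : ℂ) * u := by
  haveI : Fact p.Prime := ⟨hp⟩
  have hp0 : 0 < p := hp.pos
  have key : (p : ℂ) = ∏ μ ∈ primitiveRoots p ℂ, (1 - μ) := by
    have h1 : eval 1 (cyclotomic p ℂ) = (p : ℂ) := by
      simpa using eval_one_cyclotomic_prime (R := ℂ) (p := p)
    rw [cyclotomic_eq_prod_X_sub_primitiveRoots hζ] at h1
    rw [← h1, eval_prod]
    simp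
  -- choose factorizations both ways
  choose t ht hfac using fun μ (hμ : μ ∈ primitiveRoots p ℂ) =>
    aux_factor hp0 hζ (((mem_primitiveRoots hp0).mp hμ).pow_eq_one)
  choose s hs hfac' using fun μ (hμ : μ ∈ primitiveRoots p ℂ) =>
    aux_factor hp0 ((mem_primitiveRoots hp0).mp hμ) hζ.pow_eq_one
  have hcard : #(primitiveRoots p ℂ) = p - 1 := by
    rw [hζ.card_primitiveRoots, Nat.totient_prime hp]
  have hT : (p : ℂ) = (1 - ζ) ^ (p - 1) * ∏ μ ∈ (primitiveRoots p ℂ).attach, t μ.1 μ.2 := by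
    rw [key, ← Finset.prod_attach (f := fun μ => 1 - μ)]
    rw [← hcard, ← Finset.card_attach, ← Finset.prod_const, ← Finset.prod_mul_distrib]
    exact Finset.prod_congr rfl fun μ _ => hfac μ.1 μ.2
  have hS : (1 - ζ) ^ (p - 1) = (p : ℂ) * ∏ μ ∈ (primitiveRoots p ℂ).attach, s μ.1 μ.2 := by
    conv_lhs => rw [← hcard, ← Finset.card_attach, ← Finset.prod_const]
    rw [key, ← Finset.prod_attach (f := fun μ => 1 - μ), ← Finset.prod_mul_distrib]
    exact Finset.prod_congr rfl fun μ _ => hfac' μ.1 μ.2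
  refine ⟨∏ μ ∈ (primitiveRoots p ℂ).attach, s μ.1 μ.2,
    ∏ μ ∈ (primitiveRoots p ℂ).attach, t μ.1 μ.2,
    IsIntegral.prod _ (fun μ _ => hs μ.1 μ.2),
    IsIntegral.prod _ (fun μ _ => ht μ.1 μ.2), ?_, hS⟩
  have hpne : (p : ℂ) ≠ 0 := Nat.cast_ne_zero.mpr hp0.ne'
  have h2 : (p : ℂ) * ((∏ μ ∈ (primitiveRoots p ℂ).attach, s μ.1 μ.2) *
      ∏ μ ∈ (primitiveRoots p ℂ).attach, t μ.1 μ.2) = (p : ℂ) * 1 := by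
    rw [mul_one]
    calc (p : ℂ) * _ = ((p:ℂ) * ∏ μ ∈ (primitiveRoots p ℂ).attach, s μ.1 μ.2) *
        ∏ μ ∈ (primitiveRoots p ℂ).attach, t μ.1 μ.2 := by ring
    _ = (p : ℂ) := by rw [← hS, ← hT]
  exact mul_left_cancel₀ hpne h2

theorem one_sub_primitive_prime_roots_multiplicatively_independent
    (n : ℕ) (p : Fin n → ℕ) (hp : ∀ i, (p i).Prime) (hinj : Function.Injective p)
    (ζ : Fin n → ℂ) (hζ : ∀ i, IsPrimitiveRoot (ζ i) (p i))
    (α : Fin n → ℤ) (hrel : ∏ i, (1 - ζ i) ^ (α i) = 1) :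
    ∀ i, α i = 0 := by
  choose u v hu hv huv hpow using fun i => aux_unit (hp i) (hζ i)
  have hune : ∀ i, u i ≠ 0 := fun i => left_ne_zero_of_mul (huv i ▸ one_ne_zero)
  have hvinv : ∀ i, (u i)⁻¹ = v i := fun i =>
    (eq_inv_of_mul_eq_one_left (by rw [mul_comm]; exact huv i)).symm
  have hpne : ∀ i, (p i : ℂ) ≠ 0 := fun i => Nat.cast_ne_zero.mpr (hp i).pos.ne'
  set M : Fin n → ℕ := fun i => ∏ j ∈ Finset.univ.erase i, (p j - 1) with hM
  have hMpos : ∀ i, 0 < M i := fun i => Finset.prod_pos fun j _ =>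
    Nat.sub_pos_of_lt (hp j).one_lt
  set β : Fin n → ℤ := fun i => α i * M i with hβ
  set a : Fin n → ℕ := fun i => (β i).toNat with ha
  set b : Fin n → ℕ := fun i => (-β i).toNat with hb
  have hab : ∀ i, β i = (a i : ℤ) - (b i : ℤ) := fun i =>
    (Int.toNat_sub_toNat_neg (β i)).symm
  have hbig : (∏ i, (p i : ℂ) ^ (β i)) * (∏ i, (u i) ^ (β i)) = 1 := by
    rw [← Finset.prod_mul_distrib]
    have h1 : (∏ i, (1 - ζ i) ^ (α i)) ^ (∏ j, (p j - 1)) = 1 := by rw [hrel, one_pow]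
    rw [← Finset.prod_pow] at h1
    rw [← h1]
    refine Finset.prod_congr rfl fun i _ => ?_
    have hsplit : ∏ j, (p j - 1) = (p i - 1) * M i :=
      (Finset.mul_prod_erase Finset.univ _ (Finset.mem_univ i)).symm
    rw [hsplit]
    calc (p i : ℂ) ^ (β i) * (u i) ^ (β i)
        = ((p i : ℂ) * u i) ^ (β i) := (mul_zpow _ _ _).symm
      _ = ((1 - ζ i) ^ (p i - 1)) ^ (β i) := by rw [← hpow i]
      _ = (1 - ζ i) ^ ((((p i - 1) : ℕ) : ℤ) * β i) := by
          rw [← zpow_natCast (1 - ζ i) (p i - 1), ← zpow_mul]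
      _ = (1 - ζ i) ^ (α i * ((((p i - 1) * M i : ℕ)) : ℤ)) := by
          congr 1; push_cast [hβ]; ring
      _ = ((1 - ζ i) ^ (α i)) ^ ((p i - 1) * M i) := by
          rw [← zpow_natCast ((1 - ζ i) ^ (α i)), ← zpow_mul]
  set A : ℕ := ∏ i, (p i) ^ (a i) with hA
  set B : ℕ := ∏ i, (p i) ^ (b i) with hB
  have hApos : 0 < A := Finset.prod_pos fun i _ => pow_pos (hp i).pos _
  have hBpos : 0 < B := Finset.prod_pos fun i _ => pow_pos (hp i).pos _
  set q : ℂ := ∏ i, (p i : ℂ) ^ (β i) with hq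
  set w : ℂ := ∏ i, (u i) ^ (β i) with hw
  have hqw : q * w = 1 := hbig
  have hqcast : q = ((A : ℂ)) / ((B : ℂ)) := by
    rw [hq, hA, hB]
    push_cast
    rw [← Finset.prod_div_distrib]
    refine Finset.prod_congr rfl fun i _ => ?_
    rw [hab i, zpow_sub₀ (hpne i), zpow_natCast, zpow_natCast]
  -- q and q⁻¹ are integral over ℤ
  have hwint : IsIntegral ℤ w := by
    refine IsIntegral.prod _ fun i _ => ?_
    have : (u i) ^ (β i) = (u i) ^ (a i) * (v i) ^ (b i) := by
      rw [hab i, zpow_sub₀ (hune i), zpow_natCast, zpow_natCast, ← hvinv i,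
        div_eq_mul_inv, inv_pow]
    rw [this]
    exact ((hu i).pow _).mul ((hv i).pow _)
  have hqint : IsIntegral ℤ q := by
    have hq' : q = ∏ i, (u i) ^ (-β i) := by
      have h1 : q = w⁻¹ := eq_inv_of_mul_eq_one_left (mul_comm q w ▸ hqw)
      rw [h1, hw, ← Finset.prod_inv_distrib]
      exact Finset.prod_congr rfl fun i _ => (zpow_neg _ _).symm
    rw [hq']
    refine IsIntegral.prod _ fun i _ => ?_
    have : (u i) ^ (-β i) = (u i) ^ (b i) * (v i) ^ (a i) := by
      rw [hab i, neg_sub, zpow_sub₀ (hune i), zpow_natCast, zpow_natCast, ← hvinv i,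
        div_eq_mul_inv, inv_pow]
    rw [this]
    exact ((hu i).pow _).mul ((hv i).pow _)
  -- transfer to ℚ : q is a rational number, integral over ℤ, hence an integer
  set r : ℚ := (A : ℚ) / (B : ℚ) with hr
  have hrpos : 0 < r := div_pos (by exact_mod_cast hApos) (by exact_mod_cast hBpos)
  have hrq : ((r : ℚ) : ℂ) = q := by rw [hqcast, hr]; push_cast; ring
  have hrint : IsIntegral ℤ r := by
    rw [show ((r : ℚ) : ℂ) = algebraMap ℚ ℂ r from rfl] at hrq
    exact (isIntegral_algebraMap_iff (algebraMap ℚ ℂ).injective).mp (hrq ▸ hqint)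
  have hrinvint : IsIntegral ℤ r⁻¹ := by
    have h1 : ((r⁻¹ : ℚ) : ℂ) = w := by
      have : q⁻¹ = w := inv_eq_of_mul_eq_one_right hqw
      rw [← this, ← hrq]; push_cast; ring
    rw [show ((r⁻¹ : ℚ) : ℂ) = algebraMap ℚ ℂ r⁻¹ from rfl] at h1
    exact (isIntegral_algebraMap_iff (algebraMap ℚ ℂ).injective).mp (h1 ▸ hwint)
  obtain ⟨m, hm⟩ := IsIntegrallyClosed.isIntegral_iff.mp hrint
  obtain ⟨m', hm'⟩ := IsIntegrallyClosed.isIntegral_iff.mp hrinvint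
  have hmm' : m * m' = 1 := by
    have : ((m * m' : ℤ) : ℚ) = 1 := by
      push_cast
      rw [show ((m : ℚ)) = r from hm, show ((m' : ℚ)) = r⁻¹ from hm']
      exact mul_inv_cancel₀ hrpos.ne'
    exact_mod_cast this
  have hr1 : r = 1 := by
    rcases Int.isUnit_iff.mp (IsUnit.of_mul_eq_one _ hmm') with h1 | h1
    · rw [← hm, h1]; norm_num
    · exfalso; rw [← hm, h1] at hrpos; norm_num at hrpos
  have hAB : A = B := by
    have : (A : ℚ) = (B : ℚ) := by
      rw [hr, div_eq_one_iff_eq (by exact_mod_cast hBpos.ne')] at hr1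
      exact_mod_cast hr1
    exact_mod_cast this
  -- compare factorizations
  intro i
  have hfact : ∀ (c : Fin n → ℕ), (∏ j, (p j) ^ (c j)).factorization (p i) = c i := by
    intro c
    rw [Nat.factorization_prod (fun j _ => pow_ne_zero _ (hp j).pos.ne')]
    rw [Finset.sum_apply']
    rw [Finset.sum_eq_single i]
    · rw [(hp i).factorization_pow, Finsupp.single_apply, if_pos rfl]
    · intro j _ hj
      rw [(hp j).factorization_pow, Finsupp.single_apply,
        if_neg (fun h => hj (hinj h))]
    · intro h; exact absurd (Finset.mem_univ i) h
  have haibi : a i = b i := by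
    have h1 := hfact a
    have h2 := hfact b
    rw [← hA] at h1; rw [← hB] at h2
    rw [← h1, ← h2, hAB]
  have hβ0 : β i = 0 := by
    have := hab i
    rw [haibi] at this
    omega
  have : α i * (M i : ℤ) = 0 := hβ0
  rcases mul_eq_zero.mp this with h | h
  · exact h
  · exfalso; exact (Nat.cast_pos.mpr (hMpos i)).ne' h
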